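/- Let n ≥ 3 and 0 < r < s, and for t > 0 define ψ_t : ℝⁿ → ℝ by ψ_t(x) = (n/2)t^{2−n} − ((n−2)t^{−n}/2)|x|² for |x| ≤ t and ψ_t(x) = |x|^{2−n} for |x| > t. Then the function Φ_{r,s} := ψ_r − ψ_s is continuously differentiable on ℝⁿ with Lipschitz continuous gradient (i.e., Φ_{r,s} ∈ C^{1,1}(ℝⁿ)), is nonnegative on all of ℝⁿ, and vanishes identically on ℝⁿ \ B_s(0). -/
import Mathlib


open MeasureTheory

/-- Caffarelli's auxiliary function `ψ_t`: the paraboloid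
`(n/2)t^{2−n} − ((n−2)t^{−n}/2)|x|²` inside the closed ball of radius `t` and
the fundamental-solution profile `|x|^{2−n}` outside. -/
noncomputable def psi (n : ℕ) (t : ℝ) (x : EuclideanSpace ℝ (Fin n)) : ℝ :=
  if ‖x‖ ≤ t then
    ((n : ℝ) / 2) * t ^ ((2 : ℝ) - (n : ℝ))
      - ((n : ℝ) - 2) * t ^ (-(n : ℝ)) / 2 * ‖x‖ ^ 2
  else ‖x‖ ^ ((2 : ℝ) - (n : ℝ))

/-- Caffarelli's key test function `Φ_{r,s} = ψ_r − ψ_s`. -/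
noncomputable def Phi (n : ℕ) (r s : ℝ) (x : EuclideanSpace ℝ (Fin n)) : ℝ :=
  psi n r x - psi n s x

namespace StmtTwoAux

open Set Filter Real

/-- 1-D profile: `psi n t x = hh n t (‖x‖ ^ 2)`. -/
noncomputable def hh (n : ℕ) (t : ℝ) (v : ℝ) : ℝ :=
  if v ≤ t ^ 2 then
    ((n : ℝ) / 2) * t ^ ((2 : ℝ) - (n : ℝ)) - ((n : ℝ) - 2) * t ^ (-(n : ℝ)) / 2 * v
  else v ^ (((2 : ℝ) - (n : ℝ)) / 2)

/-- Derivative of `hh n t`. -/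
noncomputable def hh' (n : ℕ) (t : ℝ) (v : ℝ) : ℝ :=
  if v ≤ t ^ 2 then -(((n : ℝ) - 2) * t ^ (-(n : ℝ)) / 2)
  else (((2 : ℝ) - (n : ℝ)) / 2) * v ^ ((((2 : ℝ) - (n : ℝ)) / 2) - 1)

lemma sq_rpow {u : ℝ} (hu : 0 ≤ u) (c : ℝ) : ((u ^ 2 : ℝ)) ^ c = u ^ (2 * c) := by
  rw [← Real.rpow_natCast u 2, ← Real.rpow_mul hu]
  norm_num

lemma hh_junction {n : ℕ} {t : ℝ} (ht : 0 < t) :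
    ((n : ℝ) / 2) * t ^ ((2 : ℝ) - (n : ℝ)) - ((n : ℝ) - 2) * t ^ (-(n : ℝ)) / 2 * t ^ 2
      = ((t ^ 2 : ℝ)) ^ (((2 : ℝ) - (n : ℝ)) / 2) := by
  rw [sq_rpow ht.le]
  have h2 : t ^ (-(n : ℝ)) * t ^ (2 : ℝ) = t ^ ((2 : ℝ) - (n : ℝ)) := by
    rw [← Real.rpow_add ht]; ring_nf
  have h3 : (t : ℝ) ^ 2 = t ^ (2 : ℝ) := by
    rw [← Real.rpow_natCast t 2]; norm_num
  have h4 : (2 : ℝ) * (((2 : ℝ) - (n : ℝ)) / 2) = (2 : ℝ) - (n : ℝ) := by ring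
  rw [h4, h3]
  linear_combination (-(((n : ℝ) - 2) / 2)) * h2

lemma hh'_junction {n : ℕ} {t : ℝ} (ht : 0 < t) :
    (((2 : ℝ) - (n : ℝ)) / 2) * ((t ^ 2 : ℝ)) ^ ((((2 : ℝ) - (n : ℝ)) / 2) - 1)
      = -(((n : ℝ) - 2) * t ^ (-(n : ℝ)) / 2) := by
  rw [sq_rpow ht.le]
  have h : (2 : ℝ) * ((((2 : ℝ) - (n : ℝ)) / 2) - 1) = -(n : ℝ) := by ring
  rw [h]; ring

lemma hh_at_junction {n : ℕ} {t : ℝ} (ht : 0 < t) :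
    hh n t (t ^ 2) = ((t ^ 2 : ℝ)) ^ (((2 : ℝ) - (n : ℝ)) / 2) := by
  simp only [hh, if_pos le_rfl]
  exact hh_junction ht

lemma psi_eq {n : ℕ} {t : ℝ} (ht : 0 < t) (x : EuclideanSpace ℝ (Fin n)) :
    psi n t x = hh n t (‖x‖ ^ 2) := by
  by_cases hx : ‖x‖ ≤ t
  · have h2 : ‖x‖ ^ 2 ≤ t ^ 2 := pow_le_pow_left₀ (norm_nonneg x) hx 2
    simp [psi, hh, hx, h2]
  · have h2 : ¬ (‖x‖ ^ 2 ≤ t ^ 2) := by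
      push_neg
      exact pow_lt_pow_left₀ (not_le.1 hx) ht.le two_ne_zero
    simp only [psi, hh, if_neg hx, if_neg h2]
    rw [sq_rpow (norm_nonneg x)]
    congr 1
    ring

lemma hh_hasDerivAt {n : ℕ} {t : ℝ} (ht : 0 < t) (v : ℝ) :
    HasDerivAt (hh n t) (hh' n t v) v := by
  have hb : HasDerivAt
      (fun w : ℝ => ((n : ℝ) / 2) * t ^ ((2 : ℝ) - (n : ℝ))
        - ((n : ℝ) - 2) * t ^ (-(n : ℝ)) / 2 * w)
      (-(((n : ℝ) - 2) * t ^ (-(n : ℝ)) / 2)) v := by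
    simpa using ((hasDerivAt_id v).const_mul (((n : ℝ) - 2) * t ^ (-(n : ℝ)) / 2)).const_sub
      (((n : ℝ) / 2) * t ^ ((2 : ℝ) - (n : ℝ)))
  rcases lt_trichotomy v (t ^ 2) with hv | hv | hv
  · have heq : hh n t =ᶠ[nhds v]
        fun w : ℝ => ((n : ℝ) / 2) * t ^ ((2 : ℝ) - (n : ℝ))
          - ((n : ℝ) - 2) * t ^ (-(n : ℝ)) / 2 * w := by
      filter_upwards [Iio_mem_nhds hv] with w hw
      simp [hh, (mem_Iio.1 hw).le]
    simp only [hh', if_pos hv.le]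
    exact hb.congr_of_eventuallyEq heq
  · subst hv
    have h1 : HasDerivWithinAt (hh n t) (-(((n : ℝ) - 2) * t ^ (-(n : ℝ)) / 2))
        (Iic (t ^ 2)) (t ^ 2) := by
      refine hb.hasDerivWithinAt.congr (fun w hw => ?_) ?_
      · simp [hh, (mem_Iic.1 hw)]
      · simp [hh]
    have hpos : (0 : ℝ) < t ^ 2 := pow_pos ht 2
    have h2 : HasDerivWithinAt (hh n t) (-(((n : ℝ) - 2) * t ^ (-(n : ℝ)) / 2))
        (Ici (t ^ 2)) (t ^ 2) := by
      have hd := (Real.hasDerivAt_rpow_const (x := t ^ 2)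
        (p := ((2 : ℝ) - (n : ℝ)) / 2) (Or.inl hpos.ne')).hasDerivWithinAt
        (s := Ici (t ^ 2))
      rw [hh'_junction ht] at hd
      refine hd.congr (fun w hw => ?_) (hh_at_junction ht)
      rcases eq_or_lt_of_le (mem_Ici.1 hw) with hw' | hw'
      · rw [← hw']; exact hh_at_junction ht
      · simp [hh, not_le.2 hw']
    have h3 := h1.union h2
    rw [Iic_union_Ici, hasDerivWithinAt_univ] at h3
    simpa only [hh', if_pos le_rfl] using h3
  · have hpos : 0 < v := lt_trans (pow_pos ht 2) hv
    have hd := Real.hasDerivAt_rpow_const (x := v)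
      (p := ((2 : ℝ) - (n : ℝ)) / 2) (Or.inl hpos.ne')
    have heq : hh n t =ᶠ[nhds v] fun w : ℝ => w ^ (((2 : ℝ) - (n : ℝ)) / 2) := by
      filter_upwards [Ioi_mem_nhds hv] with w hw
      simp [hh, not_le.2 (mem_Ioi.1 hw)]
    simp only [hh', if_neg (not_le.2 hv)]
    exact hd.congr_of_eventuallyEq heq

lemma hh'_on_Ici {n : ℕ} {t : ℝ} (ht : 0 < t) {w : ℝ} (hw : t ^ 2 ≤ w) :
    hh' n t w = (((2 : ℝ) - (n : ℝ)) / 2) * w ^ ((((2 : ℝ) - (n : ℝ)) / 2) - 1) := by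
  rcases eq_or_lt_of_le hw with hw' | hw'
  · rw [← hw']
    simp only [hh', if_pos le_rfl]
    exact (hh'_junction ht).symm
  · simp [hh', not_le.2 hw']

/-- generic gluing of a Lipschitz estimate across a point of `ℝ` -/
lemma glue {f : ℝ → ℝ} {K a : ℝ} (hK : 0 ≤ K)
    (h1 : ∀ u ∈ Iic a, ∀ v ∈ Iic a, |f u - f v| ≤ K * |u - v|)
    (h2 : ∀ u ∈ Ici a, ∀ v ∈ Ici a, |f u - f v| ≤ K * |u - v|) :
    ∀ u v : ℝ, |f u - f v| ≤ K * |u - v| := by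
  have main : ∀ u v : ℝ, u ≤ v → |f u - f v| ≤ K * |u - v| := by
    intro u v huv
    rcases le_total v a with hv | hv
    · exact h1 u (mem_Iic.2 (le_trans huv hv)) v (mem_Iic.2 hv)
    rcases le_total a u with hu | hu
    · exact h2 u (mem_Ici.2 hu) v (mem_Ici.2 hv)
    · have e1 := h1 u (mem_Iic.2 hu) a (mem_Iic.2 le_rfl)
      have e2 := h2 a (mem_Ici.2 le_rfl) v (mem_Ici.2 hv)
      have tri : |f u - f v| ≤ |f u - f a| + |f a - f v| := abs_sub_le _ _ _
      have hua : |u - a| = a - u := by rw [abs_of_nonpos (by linarith)]; ring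
      have hav : |a - v| = v - a := by rw [abs_of_nonpos (by linarith)]; ring
      have huv' : |u - v| = v - u := by rw [abs_of_nonpos (by linarith)]; ring
      rw [hua] at e1; rw [hav] at e2; rw [huv']
      linarith
  intro u v
  rcases le_total u v with h | h
  · exact main u v h
  · have := main v u h
    rw [abs_sub_comm (f u), abs_sub_comm u]
    exact this

lemma hh'_lip {n : ℕ} {t : ℝ} (ht : 0 < t) :
    ∀ u v : ℝ, |hh' n t u - hh' n t v|
      ≤ (|(((2 : ℝ) - (n : ℝ)) / 2) * ((((2 : ℝ) - (n : ℝ)) / 2) - 1)|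
          * ((t ^ 2 : ℝ)) ^ ((((2 : ℝ) - (n : ℝ)) / 2) - 2)) * |u - v| := by
  set p : ℝ := ((2 : ℝ) - (n : ℝ)) / 2 with hp
  set K : ℝ := |p * (p - 1)| * ((t ^ 2 : ℝ)) ^ (p - 2) with hKdef
  have hpos : (0 : ℝ) < t ^ 2 := pow_pos ht 2
  have hK : 0 ≤ K :=
    mul_nonneg (abs_nonneg _) (Real.rpow_nonneg hpos.le _)
  refine glue (a := t ^ 2) hK ?_ ?_
  · intro u hu v hv
    have : hh' n t u = hh' n t v := by
      simp [hh', mem_Iic.1 hu, mem_Iic.1 hv]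
    rw [this, sub_self, abs_zero]
    exact mul_nonneg hK (abs_nonneg _)
  · intro u hu v hv
    rw [hh'_on_Ici ht (mem_Ici.1 hu), hh'_on_Ici ht (mem_Ici.1 hv)]
    have hdiff : ∀ w ∈ Ici (t ^ 2), DifferentiableAt ℝ (fun w : ℝ => p * w ^ (p - 1)) w := by
      intro w hw
      have hwpos : 0 < w := lt_of_lt_of_le hpos (mem_Ici.1 hw)
      exact ((Real.hasDerivAt_rpow_const (x := w) (p := p - 1)
        (Or.inl hwpos.ne')).const_mul p).differentiableAt
    have hbound : ∀ w ∈ Ici (t ^ 2), ‖deriv (fun w : ℝ => p * w ^ (p - 1)) w‖ ≤ K := by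
      intro w hw
      have hwpos : 0 < w := lt_of_lt_of_le hpos (mem_Ici.1 hw)
      have hder : deriv (fun w : ℝ => p * w ^ (p - 1)) w = p * ((p - 1) * w ^ (p - 1 - 1)) :=
        (((Real.hasDerivAt_rpow_const (x := w) (p := p - 1)
          (Or.inl hwpos.ne'))).const_mul p).deriv
      rw [hder, Real.norm_eq_abs]
      have h1 : |p * ((p - 1) * w ^ (p - 1 - 1))| = |p * (p - 1)| * w ^ (p - 2) := by
        rw [show p * ((p - 1) * w ^ (p - 1 - 1)) = (p * (p - 1)) * w ^ (p - 1 - 1) by ring,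
          abs_mul, abs_of_nonneg (Real.rpow_nonneg hwpos.le _),
          show p - 1 - 1 = p - 2 by ring]
      rw [h1, hKdef]
      have h2 : w ^ (p - 2) ≤ ((t ^ 2 : ℝ)) ^ (p - 2) := by
        apply Real.rpow_le_rpow_of_nonpos hpos (mem_Ici.1 hw)
        have hn0 : (0 : ℝ) ≤ (n : ℝ) := Nat.cast_nonneg n
        rw [hp]; nlinarith
      exact mul_le_mul_of_nonneg_left h2 (abs_nonneg _)
    have := Convex.norm_image_sub_le_of_norm_deriv_le hdiff hbound (convex_Ici _) hv hu
    simpa [Real.norm_eq_abs] using this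

lemma hh_zero_of_ge {n : ℕ} {r s : ℝ} (hr : 0 < r) (hrs : r < s) {v : ℝ}
    (hv : s ^ 2 ≤ v) : hh n r v - hh n s v = 0 := by
  have hs : 0 < s := lt_trans hr hrs
  have hrv : ¬ (v ≤ r ^ 2) := by
    push_neg
    exact lt_of_lt_of_le (pow_lt_pow_left₀ hrs hr.le two_ne_zero) hv
  rcases eq_or_lt_of_le hv with hv' | hv'
  · rw [← hv']
    have h4 : ¬ ((s : ℝ) ^ 2 ≤ r ^ 2) := not_le.2 (pow_lt_pow_left₀ hrs hr.le two_ne_zero)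
    simp only [hh, if_neg h4, if_pos le_rfl]
    rw [hh_junction hs, sub_self]
  · simp [hh, hrv, not_le.2 hv']

lemma hh'_zero_of_ge {n : ℕ} {r s : ℝ} (hr : 0 < r) (hrs : r < s) {v : ℝ}
    (hv : s ^ 2 ≤ v) : hh' n r v - hh' n s v = 0 := by
  have hs : 0 < s := lt_trans hr hrs
  have hrv : r ^ 2 ≤ v := le_trans (pow_le_pow_left₀ hr.le hrs.le 2) hv
  rw [hh'_on_Ici hr hrv, hh'_on_Ici hs hv, sub_self]

end StmtTwoAux

open StmtTwoAux Set

set_option maxHeartbeats 2000000 in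
set_option synthInstance.maxHeartbeats 400000 in
/-- For `n ≥ 3` and `0 < r < s`, the function `Φ_{r,s} = ψ_r − ψ_s`
is `C^{1,1}` (continuously differentiable with Lipschitz gradient), nonnegative,
and vanishes identically outside the ball `B_s(0)`. -/
theorem stmt_2 (n : ℕ) (hn : 3 ≤ n) (r s : ℝ) (hr : 0 < r) (hrs : r < s) :
    ContDiff ℝ 1 (Phi n r s) ∧
    (∃ K : NNReal, LipschitzWith K (fderiv ℝ (Phi n r s))) ∧
    (∀ x, 0 ≤ Phi n r s x) ∧
    (∀ x ∉ Metric.ball (0 : EuclideanSpace ℝ (Fin n)) s, Phi n r s x = 0) := by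
  have hs : 0 < s := lt_trans hr hrs
  have hn3 : (3 : ℝ) ≤ (n : ℝ) := by exact_mod_cast hn
  set H : ℝ → ℝ := fun v => hh n r v - hh n s v with hHdef
  set H' : ℝ → ℝ := fun v => hh' n r v - hh' n s v with hH'def
  have hPhi : Phi n r s = fun x => H (‖x‖ ^ 2) := by
    funext x
    simp only [Phi, psi_eq hr x, psi_eq hs x, hHdef]
  have hHd : ∀ v, HasDerivAt H (H' v) v := fun v =>
    (hh_hasDerivAt hr v).sub (hh_hasDerivAt hs v)
  have hHdiff : Differentiable ℝ H := fun v => (hHd v).differentiableAt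
  have hderiv : deriv H = H' := funext fun v => (hHd v).deriv
  -- Lipschitz constant for H'
  set p : ℝ := ((2 : ℝ) - (n : ℝ)) / 2 with hp
  set Kr : ℝ := |p * (p - 1)| * ((r ^ 2 : ℝ)) ^ (p - 2) with hKr
  set Ks : ℝ := |p * (p - 1)| * ((s ^ 2 : ℝ)) ^ (p - 2) with hKs
  set KH : ℝ := Kr + Ks with hKH
  have hKr0 : 0 ≤ Kr := mul_nonneg (abs_nonneg _) (Real.rpow_nonneg (by positivity) _)
  have hKs0 : 0 ≤ Ks := mul_nonneg (abs_nonneg _) (Real.rpow_nonneg (by positivity) _)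
  have hKH0 : 0 ≤ KH := add_nonneg hKr0 hKs0
  have hlipH' : ∀ u v : ℝ, |H' u - H' v| ≤ KH * |u - v| := by
    intro u v
    have h1 := hh'_lip (n := n) hr u v
    have h2 := hh'_lip (n := n) hs u v
    have h3 : H' u - H' v = (hh' n r u - hh' n r v) - (hh' n s u - hh' n s v) := by
      simp only [hH'def]; ring
    rw [h3]
    calc |(hh' n r u - hh' n r v) - (hh' n s u - hh' n s v)|
        ≤ |hh' n r u - hh' n r v| + |hh' n s u - hh' n s v| := abs_sub _ _
      _ ≤ Kr * |u - v| + Ks * |u - v| := add_le_add h1 h2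
      _ = KH * |u - v| := by rw [hKH]; ring
  have hH'z : ∀ v : ℝ, s ^ 2 ≤ v → H' v = 0 := fun v hv => hh'_zero_of_ge hr hrs hv
  have hHz : ∀ v : ℝ, s ^ 2 ≤ v → H v = 0 := fun v hv => hh_zero_of_ge hr hrs hv
  have hlipW : LipschitzWith KH.toNNReal H' := by
    apply LipschitzWith.of_dist_le_mul
    intro u v
    rw [Real.dist_eq, Real.dist_eq, Real.coe_toNNReal _ hKH0]
    exact hlipH' u v
  -- C^1
  have hHC1 : ContDiff ℝ 1 H := by
    rw [contDiff_one_iff_deriv]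
    exact ⟨hHdiff, by rw [hderiv]; exact hlipW.continuous⟩
  have hC1 : ContDiff ℝ 1 (Phi n r s) := by
    rw [hPhi]
    exact hHC1.comp (contDiff_norm_sq (𝕜 := ℝ))
  -- fderiv formula
  have hfd : ∀ x : EuclideanSpace ℝ (Fin n),
      HasFDerivAt (Phi n r s) ((2 * H' (‖x‖ ^ 2)) • innerSL ℝ x) x := by
    intro x
    have h1 : HasFDerivAt (fun x : EuclideanSpace ℝ (Fin n) => ‖x‖ ^ 2)
        ((2 : ℕ) • innerSL ℝ x) x := (hasStrictFDerivAt_norm_sq x).hasFDerivAt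
    have h2 := (hHd (‖x‖ ^ 2)).comp_hasFDerivAt x h1
    have e : (H' (‖x‖ ^ 2)) • ((2 : ℕ) • innerSL ℝ x)
        = (2 * H' (‖x‖ ^ 2)) • innerSL ℝ x := by
      ext w
      simp [two_smul]
      ring
    rw [e] at h2
    rw [hPhi]
    exact h2
  have hfderiv : fderiv ℝ (Phi n r s)
      = fun x => (2 * H' (‖x‖ ^ 2)) • innerSL ℝ x := funext fun x => (hfd x).fderiv
  -- bound on H' over nonnegative arguments
  have hgbound : ∀ z : EuclideanSpace ℝ (Fin n), |H' (‖z‖ ^ 2)| ≤ KH * s ^ 2 := by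
    intro z
    rcases le_or_gt (s ^ 2) (‖z‖ ^ 2) with h | h
    · rw [hH'z _ h, abs_zero]
      positivity
    · have h1 := hlipH' (‖z‖ ^ 2) (s ^ 2)
      rw [hH'z _ le_rfl, sub_zero] at h1
      have h2 : |‖z‖ ^ 2 - s ^ 2| = s ^ 2 - ‖z‖ ^ 2 := by
        rw [abs_of_nonpos (by linarith)]; ring
      rw [h2] at h1
      have hz0 : (0 : ℝ) ≤ ‖z‖ ^ 2 := by positivity
      nlinarith
  -- key Lipschitz estimate for the gradient
  set C : ℝ := 6 * KH * s ^ 2 with hC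
  have hC0 : 0 ≤ C := by positivity
  have key : ∀ x y : EuclideanSpace ℝ (Fin n), ‖x‖ ≤ ‖y‖ →
      ‖(2 * H' (‖x‖ ^ 2)) • innerSL ℝ x - (2 * H' (‖y‖ ^ 2)) • innerSL ℝ y‖
        ≤ C * ‖x - y‖ := by
    intro x y hxy
    have hx0 : (0 : ℝ) ≤ ‖x‖ := norm_nonneg x
    have hy0 : (0 : ℝ) ≤ ‖y‖ := norm_nonneg y
    have hnxy : |‖x‖ - ‖y‖| ≤ ‖x - y‖ := abs_norm_sub_norm_le x y
    have hxy0 : (0 : ℝ) ≤ ‖x - y‖ := norm_nonneg _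
    rcases le_or_gt (‖y‖) s with hyb | hyb
    · -- both inside the closed ball of radius s
      have hdecomp : (2 * H' (‖x‖ ^ 2)) • innerSL ℝ x - (2 * H' (‖y‖ ^ 2)) • innerSL ℝ y
          = (2 * H' (‖x‖ ^ 2)) • (innerSL ℝ (x - y))
            + (2 * H' (‖x‖ ^ 2) - 2 * H' (‖y‖ ^ 2)) • innerSL ℝ y := by
        rw [map_sub, smul_sub, sub_smul]
        abel
      rw [hdecomp]
      have hb1 : ‖(2 * H' (‖x‖ ^ 2)) • (innerSL ℝ (x - y))‖
          = |2 * H' (‖x‖ ^ 2)| * ‖x - y‖ := by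
        rw [norm_smul (2 * H' (‖x‖ ^ 2)) (innerSL ℝ (x - y)), innerSL_apply_norm,
          Real.norm_eq_abs]
      have hb2 : ‖(2 * H' (‖x‖ ^ 2) - 2 * H' (‖y‖ ^ 2)) • innerSL ℝ y‖
          = |2 * H' (‖x‖ ^ 2) - 2 * H' (‖y‖ ^ 2)| * ‖y‖ := by
        rw [norm_smul (2 * H' (‖x‖ ^ 2) - 2 * H' (‖y‖ ^ 2)) (innerSL ℝ y), innerSL_apply_norm,
          Real.norm_eq_abs]
      have hsq : |‖x‖ ^ 2 - ‖y‖ ^ 2| ≤ (‖x‖ + ‖y‖) * ‖x - y‖ := by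
        have h5 : ‖x‖ ^ 2 - ‖y‖ ^ 2 = (‖x‖ + ‖y‖) * (‖x‖ - ‖y‖) := by ring
        rw [h5, abs_mul, abs_of_nonneg (by positivity)]
        exact mul_le_mul_of_nonneg_left hnxy (by positivity)
      have hH'diff : |H' (‖x‖ ^ 2) - H' (‖y‖ ^ 2)| ≤ KH * ((‖x‖ + ‖y‖) * ‖x - y‖) :=
        le_trans (hlipH' _ _) (mul_le_mul_of_nonneg_left hsq hKH0)
      have hgx := hgbound x
      have hbx : ‖x‖ ≤ s := le_trans hxy hyb
      calc ‖(2 * H' (‖x‖ ^ 2)) • (innerSL ℝ (x - y))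
            + (2 * H' (‖x‖ ^ 2) - 2 * H' (‖y‖ ^ 2)) • innerSL ℝ y‖
          ≤ ‖(2 * H' (‖x‖ ^ 2)) • (innerSL ℝ (x - y))‖
            + ‖(2 * H' (‖x‖ ^ 2) - 2 * H' (‖y‖ ^ 2)) • innerSL ℝ y‖ := norm_add_le _ _
        _ = |2 * H' (‖x‖ ^ 2)| * ‖x - y‖
            + |2 * H' (‖x‖ ^ 2) - 2 * H' (‖y‖ ^ 2)| * ‖y‖ := by rw [hb1, hb2]
        _ ≤ C * ‖x - y‖ := by
            have e1 : |2 * H' (‖x‖ ^ 2)| = 2 * |H' (‖x‖ ^ 2)| := by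
              rw [abs_mul, abs_of_nonneg (by norm_num : (0:ℝ) ≤ 2)]
            have e2 : |2 * H' (‖x‖ ^ 2) - 2 * H' (‖y‖ ^ 2)|
                = 2 * |H' (‖x‖ ^ 2) - H' (‖y‖ ^ 2)| := by
              rw [show 2 * H' (‖x‖ ^ 2) - 2 * H' (‖y‖ ^ 2)
                  = 2 * (H' (‖x‖ ^ 2) - H' (‖y‖ ^ 2)) by ring,
                abs_mul, abs_of_nonneg (by norm_num : (0:ℝ) ≤ 2)]
            rw [e1, e2, hC]
            have t2 : (‖x‖ + ‖y‖) * ‖y‖ ≤ 2 * s ^ 2 := by nlinarith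
            have t1 : |H' (‖x‖ ^ 2) - H' (‖y‖ ^ 2)| * ‖y‖
                ≤ KH * ‖x - y‖ * ((‖x‖ + ‖y‖) * ‖y‖) := by
              calc |H' (‖x‖ ^ 2) - H' (‖y‖ ^ 2)| * ‖y‖
                  ≤ (KH * ((‖x‖ + ‖y‖) * ‖x - y‖)) * ‖y‖ :=
                    mul_le_mul_of_nonneg_right hH'diff hy0
                _ = KH * ‖x - y‖ * ((‖x‖ + ‖y‖) * ‖y‖) := by ring
            have t3 : KH * ‖x - y‖ * ((‖x‖ + ‖y‖) * ‖y‖)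
                ≤ KH * ‖x - y‖ * (2 * s ^ 2) :=
              mul_le_mul_of_nonneg_left t2 (mul_nonneg hKH0 hxy0)
            have t4 := t1.trans t3
            have g1 : |H' (‖x‖ ^ 2)| * ‖x - y‖ ≤ (KH * s ^ 2) * ‖x - y‖ :=
              mul_le_mul_of_nonneg_right hgx hxy0
            nlinarith [t4, g1]
    · -- y is outside the ball of radius s
      have hy2 : s ^ 2 ≤ ‖y‖ ^ 2 := by nlinarith
      rw [hH'z _ hy2]
      rcases le_or_gt s (‖x‖) with hxb | hxb
      · have hx2 : s ^ 2 ≤ ‖x‖ ^ 2 := by nlinarith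
        rw [hH'z _ hx2]
        simp only [mul_zero, zero_smul, sub_zero, norm_zero]
        positivity
      · simp only [mul_zero, zero_smul, sub_zero]
        have hb1 : ‖(2 * H' (‖x‖ ^ 2)) • innerSL ℝ x‖ = |2 * H' (‖x‖ ^ 2)| * ‖x‖ := by
          rw [norm_smul (2 * H' (‖x‖ ^ 2)) (innerSL ℝ x), innerSL_apply_norm,
            Real.norm_eq_abs]
        rw [hb1]
        have h1 := hlipH' (‖x‖ ^ 2) (s ^ 2)
        rw [hH'z _ le_rfl, sub_zero] at h1
        have h2 : |‖x‖ ^ 2 - s ^ 2| = s ^ 2 - ‖x‖ ^ 2 := by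
          rw [abs_of_nonpos (by nlinarith)]; ring
        rw [h2] at h1
        have e1 : |2 * H' (‖x‖ ^ 2)| = 2 * |H' (‖x‖ ^ 2)| := by
          rw [abs_mul, abs_of_nonneg (by norm_num : (0:ℝ) ≤ 2)]
        rw [e1, hC]
        have hba : ‖y‖ - ‖x‖ ≤ ‖x - y‖ :=
          (le_abs_self (‖y‖ - ‖x‖)).trans (by rwa [abs_sub_comm] at hnxy)
        have hkey : s ^ 2 - ‖x‖ ^ 2 ≤ 2 * s * ‖x - y‖ := by nlinarith
        have h3 : |H' (‖x‖ ^ 2)| ≤ KH * (2 * s * ‖x - y‖) := by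
          calc |H' (‖x‖ ^ 2)| ≤ KH * (s ^ 2 - ‖x‖ ^ 2) := h1
            _ ≤ KH * (2 * s * ‖x - y‖) := mul_le_mul_of_nonneg_left hkey hKH0
        have t5 : |H' (‖x‖ ^ 2)| * ‖x‖ ≤ (KH * (2 * s * ‖x - y‖)) * ‖x‖ :=
          mul_le_mul_of_nonneg_right h3 hx0
        have t6 : (KH * (2 * s * ‖x - y‖)) * ‖x‖ ≤ (KH * (2 * s * ‖x - y‖)) * s :=
          mul_le_mul_of_nonneg_left hxb.le (by positivity)
        have t7 : (0 : ℝ) ≤ KH * s ^ 2 * ‖x - y‖ := by positivity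
        nlinarith [t5, t6, t7]
  -- Lipschitz of the gradient
  have hlipG : ∃ K : NNReal, LipschitzWith K (fderiv ℝ (Phi n r s)) := by
    refine ⟨C.toNNReal, ?_⟩
    rw [hfderiv]
    apply LipschitzWith.of_dist_le_mul
    intro x y
    rw [dist_eq_norm, dist_eq_norm, Real.coe_toNNReal _ hC0]
    rcases le_total (‖x‖) (‖y‖) with h | h
    · exact key x y h
    · have h1 := key y x h
      rw [norm_sub_rev, norm_sub_rev y x] at h1
      exact h1
  -- antitone on [0, s^2]
  have hanti : AntitoneOn H (Icc 0 (s ^ 2)) := by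
    apply antitoneOn_of_deriv_nonpos (convex_Icc _ _)
      hHdiff.continuous.continuousOn hHdiff.differentiableOn
    intro v hv
    rw [interior_Icc] at hv
    rw [hderiv]
    have hvs : v ≤ s ^ 2 := hv.2.le
    rcases le_or_gt v (r ^ 2) with hvr | hvr
    · simp only [hH'def, hh', if_pos hvr, if_pos hvs]
      have hsr : s ^ (-(n : ℝ)) ≤ r ^ (-(n : ℝ)) :=
        Real.rpow_le_rpow_of_nonpos hr hrs.le (neg_nonpos.2 (Nat.cast_nonneg n))
      nlinarith
    · simp only [hH'def, hh', if_neg (not_le.2 hvr), if_pos hvs]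
      have hexp : (((2 : ℝ) - (n : ℝ)) / 2) - 1 ≤ 0 := by linarith
      have h1 : ((s ^ 2 : ℝ)) ^ ((((2 : ℝ) - (n : ℝ)) / 2) - 1)
          ≤ v ^ ((((2 : ℝ) - (n : ℝ)) / 2) - 1) :=
        Real.rpow_le_rpow_of_nonpos hv.1 hvs hexp
      have h2 : ((s ^ 2 : ℝ)) ^ ((((2 : ℝ) - (n : ℝ)) / 2) - 1) = s ^ (-(n : ℝ)) := by
        rw [sq_rpow hs.le]
        congr 1
        ring
      have hc : ((2 : ℝ) - (n : ℝ)) / 2 ≤ 0 := by linarith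
      have h3 : (((2 : ℝ) - (n : ℝ)) / 2) * v ^ ((((2 : ℝ) - (n : ℝ)) / 2) - 1)
          ≤ (((2 : ℝ) - (n : ℝ)) / 2) * ((s ^ 2 : ℝ)) ^ ((((2 : ℝ) - (n : ℝ)) / 2) - 1) :=
        mul_le_mul_of_nonpos_left h1 hc
      rw [h2] at h3
      linarith
  have hHs2 : H (s ^ 2) = 0 := hHz _ le_rfl
  have hnonneg : ∀ x, 0 ≤ Phi n r s x := by
    intro x
    have hPhix : Phi n r s x = H (‖x‖ ^ 2) := by rw [hPhi]
    rw [hPhix]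
    have hv0 : (0 : ℝ) ≤ ‖x‖ ^ 2 := by positivity
    rcases le_or_gt (‖x‖ ^ 2) (s ^ 2) with h | h
    · have := hanti (Set.mem_Icc.2 ⟨hv0, h⟩) (Set.mem_Icc.2 ⟨by positivity, le_rfl⟩) h
      rw [hHs2] at this
      exact this
    · rw [hHz _ h.le]
  have hvanish : ∀ x ∉ Metric.ball (0 : EuclideanSpace ℝ (Fin n)) s, Phi n r s x = 0 := by
    intro x hx
    have hxs : s ≤ ‖x‖ := by
      by_contra hcon
      push_neg at hcon
      exact hx (Metric.mem_ball.2 (by rwa [dist_zero_right]))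
    have hx2 : s ^ 2 ≤ ‖x‖ ^ 2 := by nlinarith [norm_nonneg x]
    have hPhix : Phi n r s x = H (‖x‖ ^ 2) := by rw [hPhi]
    rw [hPhix, hHz _ hx2]
  exact ⟨hC1, hlipG, hnonneg, hvanish⟩
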